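/- Fix integers k ≥ 1 and m > 3. The number of integers x with 0 ≤ x < 3^k such that S_{2,3}(x) = m equals Σ_{j=0}^{⌊m/4⌋} C(k, j) · C(k − j, m − 4j), where C denotes the binomial coefficient (with C(a, c) = 0 when c > a, and k − j interpreted as 0 when j > k). Here the index j counts the base-3 digits equal to 2 and m − 4j counts the digits equal to 1. -/

import Mathlib

/-- The `e`-power base-`b` happy function: the sum of the `e`-th powers of the
base-`b` digits of `n`. -/
def S (e b n : ℕ) : ℕ := ((Nat.digits b n).map (· ^ e)).sum


open Finset

lemma S_rec (n : ℕ) : S 2 3 n = (n % 3) ^ 2 + S 2 3 (n / 3) := by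
  rcases Nat.eq_zero_or_pos n with h | h
  · simp [S, h]
  · rw [S, Nat.digits_def' (by norm_num : 1 < 3) h]
    simp [S]

def cnt (k m : ℕ) : ℕ := ((range (3 ^ k)).filter (fun x => S 2 3 x = m)).card

def G (n j m : ℕ) : ℕ := if 4 * j ≤ m then Nat.choose (n - j) (m - 4 * j) else 0

def hh (k m : ℕ) : ℕ := ∑ j ∈ range (k + 1), Nat.choose k j * G k j m

lemma g_eq_hh (k m : ℕ) :
    (∑ j ∈ range (m / 4 + 1), Nat.choose k j * Nat.choose (k - j) (m - 4 * j)) = hh k m := by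
  have e1 : (∑ j ∈ range (m / 4 + 1), Nat.choose k j * Nat.choose (k - j) (m - 4 * j))
      = ∑ j ∈ range (m / 4 + 1), Nat.choose k j * G k j m := by
    refine Finset.sum_congr rfl fun j hj => ?_
    have hj' : j ≤ m / 4 := Nat.lt_succ_iff.mp (mem_range.mp hj)
    have : 4 * j ≤ m := by
      have := (Nat.le_div_iff_mul_le (by norm_num : 0 < 4)).mp hj'
      omega
    simp [G, this]
  have e2 : ∑ j ∈ range (m / 4 + 1), Nat.choose k j * G k j m
      = ∑ j ∈ range (k + m / 4 + 2), Nat.choose k j * G k j m := by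
    refine Finset.sum_subset (by intro x hx; simp at hx ⊢; omega) ?_
    intro x hx hx'
    simp only [mem_range] at hx hx'
    have : ¬ 4 * x ≤ m := by
      intro hle
      have : x ≤ m / 4 := Nat.le_div_iff_mul_le (by norm_num) |>.mpr (by omega)
      omega
    simp [G, this]
  have e3 : hh k m = ∑ j ∈ range (k + m / 4 + 2), Nat.choose k j * G k j m := by
    refine Finset.sum_subset (by intro x hx; simp at hx ⊢; omega) ?_
    intro x hx hx'
    simp only [mem_range] at hx hx'
    rw [Nat.choose_eq_zero_of_lt (by omega), zero_mul]
  rw [e1, e2, e3]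

lemma cnt_succ (k m : ℕ) :
    cnt (k + 1) m =
      ((range (3 ^ k)).filter (fun q => 0 + S 2 3 q = m)).card +
      ((range (3 ^ k)).filter (fun q => 1 + S 2 3 q = m)).card +
      ((range (3 ^ k)).filter (fun q => 4 + S 2 3 q = m)).card := by
  have key : cnt (k + 1) m =
      ((range 3 ×ˢ range (3 ^ k)).filter (fun p => p.1 ^ 2 + S 2 3 p.2 = m)).card := by
    refine Finset.card_bij' (fun x _ => (x % 3, x / 3)) (fun p _ => 3 * p.2 + p.1) ?_ ?_ ?_ ?_
    · intro x hx
      simp only [mem_filter, mem_range, mem_product] at hx ⊢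
      refine ⟨⟨Nat.mod_lt _ (by norm_num), ?_⟩, ?_⟩
      · have : x < 3 ^ k * 3 := by rw [pow_succ] at hx; exact hx.1
        exact Nat.div_lt_of_lt_mul (by omega)
      · rw [← S_rec]; exact hx.2
    · intro p hp
      simp only [mem_filter, mem_range, mem_product] at hp ⊢
      obtain ⟨⟨h1, h2⟩, h3⟩ := hp
      constructor
      · rw [pow_succ]; omega
      · rw [S_rec]
        have hm3 : (3 * p.2 + p.1) % 3 = p.1 := by omega
        have hd3 : (3 * p.2 + p.1) / 3 = p.2 := by omega
        rw [hm3, hd3]; exact h3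
    · intro x hx; simp only []; omega
    · intro p hp
      simp only [mem_filter, mem_range, mem_product] at hp
      obtain ⟨⟨h1, h2⟩, _⟩ := hp
      have hm3 : (3 * p.2 + p.1) % 3 = p.1 := by omega
      have hd3 : (3 * p.2 + p.1) / 3 = p.2 := by omega
      simp [hm3, hd3]
  rw [key]
  rw [Finset.card_filter]
  rw [Finset.sum_product]
  have inner : ∀ d : ℕ, (∑ q ∈ range (3 ^ k), if d ^ 2 + S 2 3 q = m then 1 else 0)
      = ((range (3 ^ k)).filter (fun q => d ^ 2 + S 2 3 q = m)).card := by
    intro d; rw [Finset.card_filter]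
  rw [show (3 : ℕ) = 2 + 1 from rfl, Finset.sum_range_succ, Finset.sum_range_succ,
    Finset.sum_range_succ, Finset.sum_range_zero]
  rw [inner 0, inner 1, inner 2]
  norm_num

lemma G_left (k j m : ℕ) (hj : j ≤ k) (hm : 1 ≤ m) :
    G (k+1) j m = G k j m + G k j (m-1) := by
  by_cases h1 : 4*j ≤ m - 1
  · have h2 : 4*j ≤ m := by omega
    simp only [G, if_pos h1, if_pos h2]
    have ek : k + 1 - j = (k - j) + 1 := by omega
    have em : m - 4*j = (m - 1 - 4*j) + 1 := by omega
    rw [ek, em, Nat.choose_succ_succ]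
    simp only [Nat.succ_eq_add_one, ← em]
    omega
  · by_cases h2 : 4*j ≤ m
    · have he : m - 4*j = 0 := by omega
      have ek : k + 1 - j = (k - j) + 1 := by omega
      simp only [G, if_pos h2, if_neg h1, he, ek, Nat.choose_zero_right, add_zero]
    · have h1' : ¬ 4*j ≤ m - 1 := by omega
      simp only [G, if_neg h1', if_neg h2, add_zero]

lemma G_right (k j m : ℕ) (hm : 4 ≤ m) :
    G (k+1) (j+1) m = G k j (m-4) := by
  simp only [G]
  by_cases h : 4*(j+1) ≤ m
  · rw [if_pos h, if_pos (by omega : 4*j ≤ m - 4)]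
    congr 1 <;> omega
  · rw [if_neg h, if_neg (by omega : ¬ 4*j ≤ m - 4)]

lemma hh_succ (k m : ℕ) (hm : 4 ≤ m) :
    hh (k+1) m = hh k m + hh k (m-1) + hh k (m-4) := by
  have expand : hh (k+1) m
      = (∑ j ∈ range (k+1), (Nat.choose k j * G (k+1) (j+1) m
          + Nat.choose k (j+1) * G (k+1) (j+1) m))
        + Nat.choose (k+1) 0 * G (k+1) 0 m := by
    rw [hh, Finset.sum_range_succ']
    congr 1
    refine Finset.sum_congr rfl fun j _ => ?_
    rw [Nat.choose_succ_succ, add_mul]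
  rw [expand, Finset.sum_add_distrib]
  have A : ∑ j ∈ range (k+1), Nat.choose k j * G (k+1) (j+1) m = hh k (m-4) := by
    rw [hh]; exact Finset.sum_congr rfl fun j _ => by rw [G_right k j m hm]
  have B : (∑ j ∈ range (k+1), Nat.choose k (j+1) * G (k+1) (j+1) m)
      + Nat.choose (k+1) 0 * G (k+1) 0 m = hh k m + hh k (m-1) := by
    have step : (∑ j ∈ range (k+1), Nat.choose k (j+1) * G (k+1) (j+1) m)
        + Nat.choose k 0 * G (k+1) 0 m
        = ∑ j ∈ range (k+2), Nat.choose k j * G (k+1) j m := by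
      rw [Finset.sum_range_succ' (fun j => Nat.choose k j * G (k+1) j m) (k+1)]
    rw [show Nat.choose (k+1) 0 = Nat.choose k 0 by simp, step,
      Finset.sum_range_succ, Nat.choose_succ_self, zero_mul, add_zero]
    rw [hh, hh, ← Finset.sum_add_distrib]
    refine Finset.sum_congr rfl fun j hj => ?_
    have hj' : j ≤ k := by simpa [Nat.lt_succ_iff] using mem_range.mp hj
    rw [G_left k j m hj' (by omega), mul_add]
  omega

lemma hh_small (n m : ℕ) (hm : m ≤ 3) : hh n m = Nat.choose n m := by
  rw [hh, Finset.sum_eq_single 0]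
  · simp [G, Nat.le_of_lt_succ]
  · intro j _ hj0
    have : ¬ 4*j ≤ m := by omega
    simp [G, this]
  · intro h; simp at h

lemma main_eq : ∀ k m, cnt k m = hh k m := by
  intro k
  induction k with
  | zero =>
    intro m
    rcases Nat.eq_zero_or_pos m with rfl | hm
    · rw [hh_small 0 0 (by norm_num)]
      simp [cnt, S, Finset.range_one, Finset.filter_singleton]
    · have h1 : hh 0 m = Nat.choose 0 m := by
        simp [hh, G, Finset.sum_range_one]
      rw [h1, Nat.choose_eq_zero_of_lt hm]
      simp [cnt, S, Finset.range_one, Finset.filter_singleton, hm.ne']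
      omega
  | succ k ih =>
    intro m
    rw [cnt_succ]
    have t0 : ((range (3^k)).filter (fun q => 0 + S 2 3 q = m)).card = cnt k m := by
      rw [cnt]; congr 1; apply Finset.filter_congr; intro q _; simp
    by_cases hm1 : 1 ≤ m
    · have t1 : ((range (3^k)).filter (fun q => 1 + S 2 3 q = m)).card = cnt k (m-1) := by
        rw [cnt]; congr 1; apply Finset.filter_congr; intro q _
        constructor <;> (intro; omega)
      by_cases hm4 : 4 ≤ m
      · have t4 : ((range (3^k)).filter (fun q => 4 + S 2 3 q = m)).card = cnt k (m-4) := by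
          rw [cnt]; congr 1; apply Finset.filter_congr; intro q _
          constructor <;> (intro; omega)
        rw [t0, t1, t4, ih, ih, ih, hh_succ k m hm4]
      · have t4 : ((range (3^k)).filter (fun q => 4 + S 2 3 q = m)) = ∅ :=
          Finset.filter_false_of_mem (fun x _ => by omega)
        rw [t0, t1, t4, Finset.card_empty, add_zero, ih, ih,
          hh_small k m (by omega), hh_small k (m-1) (by omega),
          hh_small (k+1) m (by omega)]
        obtain ⟨s, rfl⟩ : ∃ s, m = s + 1 := ⟨m - 1, by omega⟩
        rw [Nat.choose_succ_succ]
        simp only [Nat.succ_eq_add_one, Nat.add_sub_cancel]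
        omega
    · have hm0 : m = 0 := by omega
      subst hm0
      have t1 : ((range (3^k)).filter (fun q => 1 + S 2 3 q = 0)) = ∅ :=
        Finset.filter_false_of_mem (fun x _ => by omega)
      have t4 : ((range (3^k)).filter (fun q => 4 + S 2 3 q = 0)) = ∅ :=
        Finset.filter_false_of_mem (fun x _ => by omega)
      rw [t0, t1, t4, Finset.card_empty, add_zero, add_zero, ih,
        hh_small k 0 (by omega), hh_small (k+1) 0 (by omega)]
      simp

theorem stmt_4 (k m : ℕ) (hk : 1 ≤ k) (hm : 3 < m) :
    ((Finset.range (3 ^ k)).filter (fun x => S 2 3 x = m)).card =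
      ∑ j ∈ Finset.range (m / 4 + 1), Nat.choose k j * Nat.choose (k - j) (m - 4 * j) := by
  rw [g_eq_hh]
  exact main_eq k m
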